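/- For every complex number w and every integer n, if |w - nπ| ≥ π/4 then e^{|Im w|} < 4 |sin w|. -/

import Mathlib

open Real Complex

set_option maxHeartbeats 1000000

lemma PT_sq_abs_sin (w : ℂ) :
    ‖Complex.sin w‖ ^ 2 = Real.sin w.re ^ 2 + Real.sinh w.im ^ 2 := by
  rw [Complex.sq_norm]
  nth_rewrite 1 [← Complex.re_add_im w]
  rw [Complex.sin_add, Complex.sin_mul_I, Complex.cos_mul_I,
    ← Complex.ofReal_sin, ← Complex.ofReal_cos, ← Complex.ofReal_sinh, ← Complex.ofReal_cosh]
  simp [Complex.normSq_apply, Complex.sin_ofReal_re, Complex.cos_ofReal_re,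
    Complex.sinh_ofReal_re, Complex.cosh_ofReal_re]
  nlinarith [Real.sin_sq_add_cos_sq w.re, Real.cosh_sq w.im]

/-- Classical lemma (Pöschel–Trubowitz): away from the zeros of `sin`,
`e^{|Im w|} < 4 |sin w|`. -/
theorem exp_abs_im_lt_four_abs_sin (w : ℂ)
    (h : ∀ n : ℤ, π / 4 ≤ ‖w - (n : ℂ) * (π : ℂ)‖) :
    Real.exp |w.im| < 4 * ‖Complex.sin w‖ := by
  set x := w.re with hx
  set y := w.im with hy
  have habs2 := PT_sq_abs_sin w
  have hA : 0 ≤ ‖Complex.sin w‖ := norm_nonneg _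
  by_cases hycase : 1/2 ≤ |y|
  · -- large imaginary part
    have h1 : Real.sinh |y| ≤ ‖Complex.sin w‖ := by
      have hsq : Real.sinh |y| ^ 2 ≤ ‖Complex.sin w‖ ^ 2 := by
        rw [habs2, ← Real.abs_sinh, ← _root_.sq_abs (Real.sinh y)]
        nlinarith [sq_nonneg (Real.sin x)]
      nlinarith [Real.sinh_nonneg_iff.mpr (abs_nonneg y)]
    have hab : Real.exp |y| * Real.exp (-|y|) = 1 := by
      rw [← Real.exp_add]; simp
    have haa : (2:ℝ) < Real.exp |y| * Real.exp |y| := by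
      rw [← Real.exp_add]
      have : Real.exp 1 ≤ Real.exp (|y| + |y|) := Real.exp_le_exp.mpr (by linarith)
      nlinarith [Real.exp_one_gt_d9]
    have h2 : Real.exp |y| < 4 * Real.sinh |y| := by
      rw [Real.sinh_eq]
      nlinarith [Real.exp_pos |y|, Real.exp_pos (-|y|)]
    linarith
  · -- small imaginary part
    push_neg at hycase
    have hπ := Real.pi_gt_d6
    have hπ2 := Real.pi_lt_d2
    set n := round (x / π) with hn
    set t := x - (n:ℝ) * π with ht
    have hle : |t| ≤ π / 2 := by
      have h1 : |x / π - n| ≤ 1/2 := abs_sub_round (x / π)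
      have h2 : |x / π - n| * π ≤ (1/2) * π :=
        mul_le_mul_of_nonneg_right h1 Real.pi_pos.le
      have h3 : |x / π - n| * π = |t| := by
        rw [← abs_of_pos Real.pi_pos, ← abs_mul, abs_of_pos Real.pi_pos]
        congr 1
        field_simp [ht]
        ring
      linarith [h3 ▸ h2]
    have hge : (0.6 : ℝ) ≤ |t| := by
      have h1 := h n
      have hsq : (π/4)^2 ≤ t^2 + y^2 := by
        have h2 : (π/4)^2 ≤ ‖w - (n : ℂ) * (π : ℂ)‖ ^ 2 :=
          pow_le_pow_left₀ (by positivity) h1 2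
        rw [Complex.sq_norm, Complex.normSq_apply] at h2
        simpa [Complex.sub_re, Complex.sub_im, ← hx, ← hy, ht, sq] using h2
      have hy2 : y^2 < 1/4 := by nlinarith [_root_.sq_abs y, abs_nonneg y]
      have hpi2 : (9.86:ℝ) < π^2 := by nlinarith
      by_contra hc
      push_neg at hc
      have ht2 : |t|^2 < 0.36 := by nlinarith [abs_nonneg t]
      rw [_root_.sq_abs] at ht2
      nlinarith
    have hs1 : Real.sin 0.6 ≤ Real.sin |t| := by
      apply Real.strictMonoOn_sin.monotoneOn
      · constructor <;> [linarith; linarith]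
      · exact ⟨by linarith [abs_nonneg t], hle⟩
      · exact hge
    have hs2 : Real.sin |t| = |Real.sin x| := by
      have hsx : |Real.sin t| = |Real.sin x| := by
        rw [ht, Real.sin_sub_int_mul_pi]
        rcases Int.even_or_odd n with he | ho
        · rw [he.neg_one_zpow, one_mul]
        · rw [ho.neg_one_zpow, neg_one_mul, _root_.abs_neg]
      rcases abs_cases t with ⟨h1, h2⟩ | ⟨h1, h2⟩ <;> rw [h1, ← hsx]
      · rw [_root_.abs_of_nonneg (Real.sin_nonneg_of_nonneg_of_le_pi h2 (by rw [← h1]; linarith))]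
      · rw [Real.sin_neg, _root_.abs_of_nonpos (Real.sin_nonpos_of_nonpos_of_neg_pi_le h2.le
          (by rw [← neg_le, ← h1] at *; linarith))]
    have h3 : |Real.sin x| ≤ ‖Complex.sin w‖ := by
      have hsq : |Real.sin x| ^ 2 ≤ ‖Complex.sin w‖ ^ 2 := by
        rw [habs2, _root_.sq_abs]
        nlinarith [sq_nonneg (Real.sinh y)]
      nlinarith [abs_nonneg (Real.sin x)]
    have hsin06 : (0.546 : ℝ) < Real.sin 0.6 := by
      have := Real.sin_gt_sub_cube (by norm_num : (0:ℝ) < 0.6)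
      nlinarith
    have hexp : Real.exp |y| < 1.649 := by
      have h1 : Real.exp |y| ≤ Real.exp (1/2) := Real.exp_le_exp.mpr hycase.le
      have h2 : Real.exp (1/2) * Real.exp (1/2) = Real.exp 1 := by
        rw [← Real.exp_add]; norm_num
      nlinarith [Real.exp_one_lt_d9, Real.exp_pos (1/2 : ℝ)]
    nlinarith
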